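/- arXiv:1907.07411 — 3 statements merged into one kernel-verified Lean document; each statement's English description precedes it below -/
import Mathlib

section
/- Under the standard far-field narrowband model, where the per-antenna, per-subcarrier phase gradient vector with respect to the parameters η = (ψ, d, θ, B) is u(n,k) = (−λ/(2π), −k·r_f, nΔ·sin θ, k·r_f), and the Fisher information matrix is defined entrywise by J_{pq} = γ · Σ_{n=−N/2}^{N/2} Σ_{k=−K/2}^{K/2} |s(k)|² · u_p(n,k) · u_q(n,k), the following closed form holds (assuming |s(−k)| = |s(k)| for all k): J = γ·(λ/(2π))²·E_{K,0}·E_{N,0}·e₁e₁ᵀ + γ·E_{K,2}·E_{N,0}·r_f²·(e₂−e₄)(e₂−e₄)ᵀ + γ·E_{K,0}·E_{N,2}·Δ²·sin²θ·e₃e₃ᵀ, where e_i denotes the i-th standard basis vector of ℝ⁴. -/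
open Finset Matrix

lemma odd_sum (m : ℤ) (f : ℤ → ℝ) (hf : ∀ x, f (-x) = - f x) :
    ∑ n ∈ Finset.Icc (-m) m, f n = 0 := by
  have h : ∑ n ∈ Finset.Icc (-m) m, f n = ∑ n ∈ Finset.Icc (-m) m, f (-n) := by
    apply Finset.sum_nbij' (fun n => -n) (fun n => -n) <;>
      simp +contextual [Finset.mem_Icc, neg_le, le_neg]
  have h2 : ∑ n ∈ Finset.Icc (-m) m, f (-n) = -∑ n ∈ Finset.Icc (-m) m, f n := by
    simp [hf]
  linarith [h, h2]

lemma master (SN SK : Finset ℤ) (w : ℤ → ℝ) (a b c a' b' c' : ℝ)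
    (hB : ∑ k ∈ SK, (k : ℝ) * w k = 0) (hQ : ∑ n ∈ SN, (n : ℝ) = 0) :
    ∑ n ∈ SN, ∑ k ∈ SK, w k * (a + b * k + c * n) * (a' + b' * k + c' * n)
      = a * a' * (∑ k ∈ SK, w k) * (∑ n ∈ SN, (1 : ℝ))
      + b * b' * (∑ k ∈ SK, (k : ℝ) ^ 2 * w k) * (∑ n ∈ SN, (1 : ℝ))
      + c * c' * (∑ k ∈ SK, w k) * (∑ n ∈ SN, (n : ℝ) ^ 2) := by
  have inner : ∀ n : ℤ, ∑ k ∈ SK, w k * (a + b * k + c * n) * (a' + b' * k + c' * n)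
      = (∑ k ∈ SK, w k) * ((a + c * n) * (a' + c' * n))
        + (∑ k ∈ SK, (k : ℝ) ^ 2 * w k) * (b * b') := by
    intro n
    have : ∑ k ∈ SK, w k * (a + b * k + c * n) * (a' + b' * k + c' * n)
        = ∑ k ∈ SK, (w k * ((a + c * n) * (a' + c' * n))
          + ((k : ℝ) * w k) * ((a + c * n) * b' + (a' + c' * n) * b)
          + ((k : ℝ) ^ 2 * w k) * (b * b')) := by
      exact Finset.sum_congr rfl fun k _ => by ring
    rw [this, Finset.sum_add_distrib, Finset.sum_add_distrib,
      ← Finset.sum_mul, ← Finset.sum_mul, ← Finset.sum_mul, hB]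
    ring
  simp only [inner]
  rw [Finset.sum_add_distrib]
  have h3 : ∑ n ∈ SN, (∑ k ∈ SK, w k) * ((a + c * n) * (a' + c' * n))
      = ((∑ k ∈ SK, w k) * (a * a')) * (∑ n ∈ SN, (1:ℝ))
        + ((∑ k ∈ SK, w k) * (a * c' + a' * c)) * (∑ n ∈ SN, (n:ℝ))
        + ((∑ k ∈ SK, w k) * (c * c')) * (∑ n ∈ SN, (n:ℝ)^2) := by
    rw [Finset.mul_sum, Finset.mul_sum, Finset.mul_sum,
      ← Finset.sum_add_distrib, ← Finset.sum_add_distrib]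
    exact Finset.sum_congr rfl fun n _ => by ring
  rw [h3, hQ, Finset.sum_const, nsmul_eq_mul, Finset.sum_const, nsmul_eq_mul]
  simp
  ring

/-- Closed form of the Fisher information matrix in the standard
far-field narrowband model, over the parameters η = (ψ, d, θ, B). -/
theorem standard_farfield_FIM
    (K N : ℕ) (hK : Even K) (hN : Even N)
    (s : ℤ → ℂ) (hs : ∀ k : ℤ, ‖s (-k)‖ = ‖s k‖)
    (Δ lam rf γ θ : ℝ) (hΔ : 0 < Δ) (hlam : 0 < lam) (hγ : 0 < γ)
    (EK0 EK2 EN0 EN2 : ℝ)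
    (hEK0 : EK0 = ∑ k ∈ Finset.Icc (-(K : ℤ) / 2) ((K : ℤ) / 2),
      (‖s k‖) ^ 2)
    (hEK2 : EK2 = ∑ k ∈ Finset.Icc (-(K : ℤ) / 2) ((K : ℤ) / 2),
      (k : ℝ) ^ 2 * (‖s k‖) ^ 2)
    (hEN0 : EN0 = ∑ n ∈ Finset.Icc (-(N : ℤ) / 2) ((N : ℤ) / 2), ((1 : ℝ)))
    (hEN2 : EN2 = ∑ n ∈ Finset.Icc (-(N : ℤ) / 2) ((N : ℤ) / 2), ((n : ℝ)) ^ 2)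
    -- the phase gradient vector u(n,k) over η = (ψ, d, θ, B)
    (u : ℤ → ℤ → Fin 4 → ℝ)
    (hu : ∀ n k : ℤ, u n k =
      ![-(lam / (2 * Real.pi)), -(k : ℝ) * rf, (n : ℝ) * Δ * Real.sin θ, (k : ℝ) * rf])
    -- the Fisher information matrix, entrywise
    (J : Matrix (Fin 4) (Fin 4) ℝ)
    (hJ : ∀ p q : Fin 4, J p q = γ *
      ∑ n ∈ Finset.Icc (-(N : ℤ) / 2) ((N : ℤ) / 2),
        ∑ k ∈ Finset.Icc (-(K : ℤ) / 2) ((K : ℤ) / 2),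
          (‖s k‖) ^ 2 * u n k p * u n k q)
    -- standard basis vectors of ℝ⁴
    (e : Fin 4 → Fin 4 → ℝ) (he : ∀ i, e i = Pi.single i 1) :
    J = (γ * (lam / (2 * Real.pi)) ^ 2 * EK0 * EN0) • vecMulVec (e 0) (e 0)
      + (γ * EK2 * EN0 * rf ^ 2) • vecMulVec (e 1 - e 3) (e 1 - e 3)
      + (γ * EK0 * EN2 * Δ ^ 2 * (Real.sin θ) ^ 2) • vecMulVec (e 2) (e 2) := by
  obtain ⟨mk, hmk⟩ := hK
  obtain ⟨mn, hmn⟩ := hN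
  have hKneg : (-(K : ℤ)) / 2 = -((K : ℤ) / 2) := by omega
  have hNneg : (-(N : ℤ)) / 2 = -((N : ℤ) / 2) := by omega
  have hB : ∑ k ∈ Finset.Icc (-(K : ℤ) / 2) ((K : ℤ) / 2),
      (k : ℝ) * (‖s k‖) ^ 2 = 0 := by
    rw [hKneg]
    exact odd_sum _ _ (fun x => by rw [hs x]; push_cast; ring)
  have hQ : ∑ n ∈ Finset.Icc (-(N : ℤ) / 2) ((N : ℤ) / 2), (n : ℝ) = 0 := by
    rw [hNneg]
    exact odd_sum _ _ (fun x => by push_cast; ring)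
  have huval : ∀ (p : Fin 4) (n k : ℤ), u n k p =
      (![-(lam / (2 * Real.pi)), 0, 0, 0] : Fin 4 → ℝ) p
      + (![0, -rf, 0, rf] : Fin 4 → ℝ) p * k
      + (![0, 0, Δ * Real.sin θ, 0] : Fin 4 → ℝ) p * n := by
    intro p n k
    rw [hu]
    fin_cases p <;> simp <;> ring
  have hJ' : ∀ p q : Fin 4, J p q = γ *
      ((![-(lam / (2 * Real.pi)), 0, 0, 0] : Fin 4 → ℝ) p
        * (![-(lam / (2 * Real.pi)), 0, 0, 0] : Fin 4 → ℝ) q * EK0 * EN0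
      + (![0, -rf, 0, rf] : Fin 4 → ℝ) p * (![0, -rf, 0, rf] : Fin 4 → ℝ) q * EK2 * EN0
      + (![0, 0, Δ * Real.sin θ, 0] : Fin 4 → ℝ) p
        * (![0, 0, Δ * Real.sin θ, 0] : Fin 4 → ℝ) q * EK0 * EN2) := by
    intro p q
    rw [hJ, hEK0, hEK2, hEN0, hEN2]
    congr 1
    rw [show (∑ n ∈ Finset.Icc (-(N : ℤ) / 2) ((N : ℤ) / 2),
        ∑ k ∈ Finset.Icc (-(K : ℤ) / 2) ((K : ℤ) / 2),
          (‖s k‖) ^ 2 * u n k p * u n k q)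
      = ∑ n ∈ Finset.Icc (-(N : ℤ) / 2) ((N : ℤ) / 2),
        ∑ k ∈ Finset.Icc (-(K : ℤ) / 2) ((K : ℤ) / 2),
          (‖s k‖) ^ 2
          * ((![-(lam / (2 * Real.pi)), 0, 0, 0] : Fin 4 → ℝ) p
              + (![0, -rf, 0, rf] : Fin 4 → ℝ) p * k
              + (![0, 0, Δ * Real.sin θ, 0] : Fin 4 → ℝ) p * n)
          * ((![-(lam / (2 * Real.pi)), 0, 0, 0] : Fin 4 → ℝ) q
              + (![0, -rf, 0, rf] : Fin 4 → ℝ) q * k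
              + (![0, 0, Δ * Real.sin θ, 0] : Fin 4 → ℝ) q * n) from
      Finset.sum_congr rfl fun n _ => Finset.sum_congr rfl fun k _ => by
        rw [huval p n k, huval q n k]]
    rw [master _ _ (fun k => (‖s k‖) ^ 2) _ _ _ _ _ _ hB hQ]
  ext p q
  rw [hJ' p q]
  fin_cases p <;> fin_cases q <;>
    simp [he, vecMulVec_apply, Pi.single_apply] <;> ring
end

section
/- For any real numbers a, b and any x, y with d = √(x² + y²) > 0, the 3×3 matrix M = a·v vᵀ + b·e⊥ e⊥ᵀ with v = (x/d, y/d, −1) and e⊥ = (−y/d, x/d, 0) annihilates the vector v₀ = (x/d, y/d, 1): M·v₀ = 0. Consequently, M is singular, so the position (x,y) and the clock bias B are not jointly identifiable from the standard far-field narrowband Fisher information matrix J(x,B) = a·v vᵀ + b·e⊥ e⊥ᵀ. -/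
open Matrix

/-- The far-field position–bias FIM annihilates the direction
v₀ = (x/d, y/d, 1), hence it is singular and position and clock bias are not
jointly identifiable. -/
theorem FIM_singular
    (x y : ℝ) (hxy : (x, y) ≠ (0, 0))
    (d : ℝ) (hd : d = Real.sqrt (x ^ 2 + y ^ 2)) (hdpos : 0 < d)
    (a b : ℝ)
    (M : Matrix (Fin 3) (Fin 3) ℝ)
    (hM : M = a • vecMulVec ![x / d, y / d, -1] ![x / d, y / d, -1]
            + b • vecMulVec ![-y / d, x / d, 0] ![-y / d, x / d, 0]) :
    M.mulVec ![x / d, y / d, 1] = 0 ∧ M.det = 0 := by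
  have hd2 : d ^ 2 = x ^ 2 + y ^ 2 := by
    rw [hd, Real.sq_sqrt (by positivity)]
  have hdne : d ≠ 0 := ne_of_gt hdpos
  have hnull : M.mulVec ![x / d, y / d, 1] = 0 := by
    subst hM
    funext i
    fin_cases i <;>
      simp [mulVec, vecMulVec, dotProduct, Fin.sum_univ_three] <;>
      field_simp
    · linear_combination (-(a*x)) * hd2
    · linear_combination (-(a*y)) * hd2
    · linear_combination (a) * hd2
  refine ⟨hnull, ?_⟩
  rw [← Matrix.exists_mulVec_eq_zero_iff]
  refine ⟨![x / d, y / d, 1], ?_, hnull⟩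
  intro h
  have := congrFun h 2
  simp at this
end

section
/- (Theorem 1, narrowband near-field FIM.) Consider the narrowband near-field model with phase ξ_n[k] = d_n + (k·r_f − 1)·d − k·r_f·B, where d_n = √(d² − 2·d·n·Δ·cos θ + n²Δ²) > 0, per-antenna amplitude weight w_n = d/d_n, and phase gradient u(n,k) = (−λ/(2π), ∂ξ_n[k]/∂d, ∂ξ_n[k]/∂θ, ∂ξ_n[k]/∂B) = (−λ/(2π), (d − nΔcos θ)/d_n − 1 + k·r_f, d·nΔ·sin θ/d_n, −k·r_f). Define the Fisher information matrix entrywise by J_{pq} = γ·Σ_{n=−N/2}^{N/2} Σ_{k=−K/2}^{K/2} |s(k)|²·w_n²·u_p(n,k)·u_q(n,k). Then, assuming |s(−k)| = |s(k)| for all k, the entries of J over η = (ψ, d, θ, B) are: J_{ψψ} = γ(λ/(2π))²·E_{K,0}·A₀⁽⁰⁾; J_{ψd} = −γ(λ/(2π))·E_{K,0}·(A₀⁽¹⁾ − (Δ/d)cos θ·A₁⁽¹⁾ − A₀⁽⁰⁾); J_{ψθ} = −γ(λ/(2π))·E_{K,0}·Δ sin θ·A₁⁽¹⁾; J_{ψB}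 = 0; J_{dd} = γ·(E_{K,0}·C₁₁ + E_{K,2}·r_f²·A₀⁽⁰⁾) with C₁₁ = A₀⁽⁰⁾ + A₀⁽²⁾ − 2((Δ/d)cos θ·A₁⁽²⁾ + A₀⁽¹⁾ − (Δ/d)cos θ·A₁⁽¹⁾) + (Δ²/d²)·A₂⁽²⁾·cos²θ; J_{dθ} = γ·E_{K,0}·Δ sin θ·(A₁⁽²⁾ − (Δ/d)cos θ·A₂⁽²⁾ − A₁⁽¹⁾); J_{dB} = −γ·E_{K,2}·r_f²·A₀⁽⁰⁾; J_{θθ} = γ·E_{K,0}·Δ²·sin²θ·A₂⁽²⁾; J_{θB} = 0; J_{BB} = γ·E_{K,2}·r_f²·A₀⁽⁰⁾. In particular, the distance d receives extra information C₁₁ from wavefront curvature that does not involve the bias B. -/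
open Finset Matrix

lemma sum_odd_zero (m : ℤ) (f : ℤ → ℝ) (hf : ∀ k, f (-k) = - f k) :
    ∑ k ∈ Finset.Icc (-m) m, f k = 0 := by
  have h1 : ∑ k ∈ Finset.Icc (-m) m, f k = ∑ k ∈ Finset.Icc (-m) m, f (-k) :=
    Finset.sum_equiv (Equiv.neg ℤ)
      (fun k => by simp [Finset.mem_Icc]; omega)
      (fun k _ => by simp)
  simp only [hf] at h1
  rw [Finset.sum_neg_distrib] at h1
  linarith

lemma inner_reduce (S : Finset ℤ) (s : ℤ → ℂ) (S0 S2 : ℝ)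
    (h0 : ∑ k ∈ S, (‖s k‖) ^ 2 = S0)
    (h1 : ∑ k ∈ S, (k : ℝ) * (‖s k‖) ^ 2 = 0)
    (h2 : ∑ k ∈ S, (k : ℝ) ^ 2 * (‖s k‖) ^ 2 = S2)
    (w a b a' b' : ℝ) :
    ∑ k ∈ S, (‖s k‖) ^ 2 * w * (a + (k : ℝ) * b) * (a' + (k : ℝ) * b')
      = w * (S0 * a * a' + S2 * b * b') := by
  have e : ∀ k : ℤ, (‖s k‖) ^ 2 * w * (a + (k : ℝ) * b) * (a' + (k : ℝ) * b')
      = (w * a * a') * (‖s k‖) ^ 2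
        + (w * (a * b' + a' * b)) * ((k : ℝ) * (‖s k‖) ^ 2)
        + (w * b * b') * ((k : ℝ) ^ 2 * (‖s k‖) ^ 2) := fun k => by ring
  simp only [e, Finset.sum_add_distrib, ← Finset.mul_sum, h0, h1, h2]
  ring

set_option maxHeartbeats 1000000 in
/-- Theorem 1: Fisher information matrix of the narrowband
near-field model over the parameters η = (ψ, d, θ, B), entrywise. -/
theorem narrowband_nearfield_FIM
    (K N : ℕ) (hK : Even K) (hN : Even N)
    (s : ℤ → ℂ) (hs : ∀ k : ℤ, ‖s (-k)‖ = ‖s k‖)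
    (d θ B Δ lam rf γ : ℝ) (hd : 0 < d) (hΔ : 0 < Δ) (hlam : 0 < lam) (hγ : 0 < γ)
    (EK0 EK2 : ℝ)
    (hEK0 : EK0 = ∑ k ∈ Finset.Icc (-(K : ℤ) / 2) ((K : ℤ) / 2),
      (‖s k‖) ^ 2)
    (hEK2 : EK2 = ∑ k ∈ Finset.Icc (-(K : ℤ) / 2) ((K : ℤ) / 2),
      (k : ℝ) ^ 2 * (‖s k‖) ^ 2)
    -- per-antenna distances d_n > 0
    (dn : ℤ → ℝ)
    (hdn : ∀ n : ℤ, dn n =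
      Real.sqrt (d ^ 2 - 2 * d * (n : ℝ) * Δ * Real.cos θ + (n : ℝ) ^ 2 * Δ ^ 2))
    (hdnpos : ∀ n ∈ Finset.Icc (-(N : ℤ) / 2) ((N : ℤ) / 2), 0 < dn n)
    -- weighted array sums A_i⁽ʲ⁾
    (A : ℕ → ℕ → ℝ)
    (hA : ∀ i j : ℕ, A i j = ∑ n ∈ Finset.Icc (-(N : ℤ) / 2) ((N : ℤ) / 2),
      (n : ℝ) ^ i * (d / dn n) ^ (j + 2))
    -- phase gradient u(n,k) over η = (ψ, d, θ, B)
    (u : ℤ → ℤ → Fin 4 → ℝ)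
    (hu : ∀ n k : ℤ, u n k =
      ![-(lam / (2 * Real.pi)),
        (d - (n : ℝ) * Δ * Real.cos θ) / dn n - 1 + (k : ℝ) * rf,
        d * (n : ℝ) * Δ * Real.sin θ / dn n,
        -((k : ℝ) * rf)])
    -- Fisher information matrix with amplitude weights w_n = d/d_n
    (J : Matrix (Fin 4) (Fin 4) ℝ)
    (hJ : ∀ p q : Fin 4, J p q = γ *
      ∑ n ∈ Finset.Icc (-(N : ℤ) / 2) ((N : ℤ) / 2),
        ∑ k ∈ Finset.Icc (-(K : ℤ) / 2) ((K : ℤ) / 2),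
          (‖s k‖) ^ 2 * (d / dn n) ^ 2 * u n k p * u n k q)
    -- the curvature-induced distance information
    (C11 : ℝ)
    (hC11 : C11 = A 0 0 + A 0 2
      - 2 * ((Δ / d) * Real.cos θ * A 1 2 + A 0 1 - (Δ / d) * Real.cos θ * A 1 1)
      + (Δ ^ 2 / d ^ 2) * A 2 2 * (Real.cos θ) ^ 2) :
    J 0 0 = γ * (lam / (2 * Real.pi)) ^ 2 * EK0 * A 0 0 ∧
    J 0 1 = -(γ * (lam / (2 * Real.pi)) * EK0 *
      (A 0 1 - (Δ / d) * Real.cos θ * A 1 1 - A 0 0)) ∧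
    J 0 2 = -(γ * (lam / (2 * Real.pi)) * EK0 * Δ * Real.sin θ * A 1 1) ∧
    J 0 3 = 0 ∧
    J 1 1 = γ * (EK0 * C11 + EK2 * rf ^ 2 * A 0 0) ∧
    J 1 2 = γ * EK0 * Δ * Real.sin θ *
      (A 1 2 - (Δ / d) * Real.cos θ * A 2 2 - A 1 1) ∧
    J 1 3 = -(γ * EK2 * rf ^ 2 * A 0 0) ∧
    J 2 2 = γ * EK0 * Δ ^ 2 * (Real.sin θ) ^ 2 * A 2 2 ∧
    J 2 3 = 0 ∧
    J 3 3 = γ * EK2 * rf ^ 2 * A 0 0 := by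
  -- the k–range is symmetric
  obtain ⟨t, ht⟩ := hK
  have hKneg : (-(K : ℤ) / 2) = -((K : ℤ) / 2) := by
    have : (K : ℤ) = 2 * t := by push_cast [ht]; ring
    omega
  have hodd : ∑ k ∈ Finset.Icc (-(K : ℤ) / 2) ((K : ℤ) / 2),
      (k : ℝ) * (‖s k‖) ^ 2 = 0 := by
    rw [hKneg]
    exact sum_odd_zero _ _ (fun k => by push_cast [hs k]; ring)
  -- component formulas for u
  have hu0 : ∀ n k : ℤ, u n k 0 = -(lam / (2 * Real.pi)) + (k : ℝ) * 0 := by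
    intro n k; rw [hu]; simp
  have hu1 : ∀ n k : ℤ, u n k 1
      = ((d - (n : ℝ) * Δ * Real.cos θ) / dn n - 1) + (k : ℝ) * rf := by
    intro n k; rw [hu]; simp
  have hu2 : ∀ n k : ℤ, u n k 2
      = d * (n : ℝ) * Δ * Real.sin θ / dn n + (k : ℝ) * 0 := by
    intro n k; rw [hu]; simp
  have hu3 : ∀ n k : ℤ, u n k 3 = 0 + (k : ℝ) * (-rf) := by
    intro n k; rw [hu]; simp
  -- reduce the double sum to a single sum over n
  have hin : ∀ (p q : Fin 4) (a a' : ℤ → ℝ) (b b' : ℝ),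
      (∀ n k : ℤ, u n k p = a n + (k : ℝ) * b) →
      (∀ n k : ℤ, u n k q = a' n + (k : ℝ) * b') →
      J p q = γ * ∑ n ∈ Finset.Icc (-(N : ℤ) / 2) ((N : ℤ) / 2),
        (d / dn n) ^ 2 * (EK0 * a n * a' n + EK2 * b * b') := by
    intro p q a a' b b' hp hq
    rw [hJ]
    congr 1
    refine Finset.sum_congr rfl fun n _ => ?_
    rw [← inner_reduce (Finset.Icc (-(K : ℤ) / 2) ((K : ℤ) / 2)) s EK0 EK2
      hEK0.symm hodd hEK2.symm ((d / dn n) ^ 2) (a n) b (a' n) b']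
    refine Finset.sum_congr rfl fun k _ => ?_
    rw [hp n k, hq n k]
  have hd' : d ≠ 0 := hd.ne'
  set SN := Finset.Icc (-(N : ℤ) / 2) ((N : ℤ) / 2) with hSN
  refine ⟨?_, ?_, ?_, ?_, ?_, ?_, ?_, ?_, ?_, ?_⟩
  · rw [hin 0 0 _ _ _ _ hu0 hu0]
    have e : ∀ n ∈ SN, (d / dn n) ^ 2 * (EK0 * (-(lam / (2 * Real.pi))) * (-(lam / (2 * Real.pi))) + EK2 * 0 * 0)
        = (EK0 * (lam / (2 * Real.pi)) ^ 2) * ((n : ℝ) ^ 0 * (d / dn n) ^ (0 + 2)) :=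
      fun n _ => by ring
    rw [Finset.sum_congr rfl e]
    simp only [Finset.sum_add_distrib, ← Finset.mul_sum, ← hA]
    ring
  · rw [hin 0 1 _ _ _ _ hu0 hu1]
    have e : ∀ n ∈ SN, (d / dn n) ^ 2 * (EK0 * (-(lam / (2 * Real.pi))) * ((d - (n : ℝ) * Δ * Real.cos θ) / dn n - 1) + EK2 * 0 * rf)
        = (EK0 * (-(lam / (2 * Real.pi)))) * ((n : ℝ) ^ 0 * (d / dn n) ^ (1 + 2))
          + (EK0 * (lam / (2 * Real.pi)) * ((Δ / d) * Real.cos θ)) * ((n : ℝ) ^ 1 * (d / dn n) ^ (1 + 2))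
          + (EK0 * (lam / (2 * Real.pi))) * ((n : ℝ) ^ 0 * (d / dn n) ^ (0 + 2)) := by
      intro n hn
      have h1 := (hdnpos n hn).ne'
      simp only [Nat.reduceAdd]
      field_simp
      ring
    rw [Finset.sum_congr rfl e]
    simp only [Finset.sum_add_distrib, ← Finset.mul_sum, ← hA]
    ring
  · rw [hin 0 2 _ _ _ _ hu0 hu2]
    have e : ∀ n ∈ SN, (d / dn n) ^ 2 * (EK0 * (-(lam / (2 * Real.pi))) * (d * (n : ℝ) * Δ * Real.sin θ / dn n) + EK2 * 0 * 0)
        = (EK0 * (-(lam / (2 * Real.pi))) * Δ * Real.sin θ) * ((n : ℝ) ^ 1 * (d / dn n) ^ (1 + 2)) := by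
      intro n hn
      have h1 := (hdnpos n hn).ne'
      simp only [Nat.reduceAdd]
      field_simp
      ring
    rw [Finset.sum_congr rfl e]
    simp only [← Finset.mul_sum, ← hA]
    ring
  · rw [hin 0 3 _ _ _ _ hu0 hu3]
    simp
  · rw [hin 1 1 _ _ _ _ hu1 hu1]
    have e : ∀ n ∈ SN, (d / dn n) ^ 2 * (EK0 * ((d - (n : ℝ) * Δ * Real.cos θ) / dn n - 1) * ((d - (n : ℝ) * Δ * Real.cos θ) / dn n - 1) + EK2 * rf * rf)
        = EK0 * ((n : ℝ) ^ 0 * (d / dn n) ^ (2 + 2))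
          + (-2 * EK0 * ((Δ / d) * Real.cos θ)) * ((n : ℝ) ^ 1 * (d / dn n) ^ (2 + 2))
          + (EK0 * (Δ ^ 2 / d ^ 2) * (Real.cos θ) ^ 2) * ((n : ℝ) ^ 2 * (d / dn n) ^ (2 + 2))
          + (-2 * EK0) * ((n : ℝ) ^ 0 * (d / dn n) ^ (1 + 2))
          + (2 * EK0 * ((Δ / d) * Real.cos θ)) * ((n : ℝ) ^ 1 * (d / dn n) ^ (1 + 2))
          + EK0 * ((n : ℝ) ^ 0 * (d / dn n) ^ (0 + 2))
          + (EK2 * rf ^ 2) * ((n : ℝ) ^ 0 * (d / dn n) ^ (0 + 2)) := by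
      intro n hn
      have h1 := (hdnpos n hn).ne'
      simp only [Nat.reduceAdd]
      field_simp
      ring
    rw [Finset.sum_congr rfl e, hC11]
    simp only [Finset.sum_add_distrib, ← Finset.mul_sum, ← hA]
    ring
  · rw [hin 1 2 _ _ _ _ hu1 hu2]
    have e : ∀ n ∈ SN, (d / dn n) ^ 2 * (EK0 * ((d - (n : ℝ) * Δ * Real.cos θ) / dn n - 1) * (d * (n : ℝ) * Δ * Real.sin θ / dn n) + EK2 * rf * 0)
        = (EK0 * Δ * Real.sin θ) * ((n : ℝ) ^ 1 * (d / dn n) ^ (2 + 2))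
          + (-(EK0 * Δ * Real.sin θ) * ((Δ / d) * Real.cos θ)) * ((n : ℝ) ^ 2 * (d / dn n) ^ (2 + 2))
          + (-(EK0 * Δ * Real.sin θ)) * ((n : ℝ) ^ 1 * (d / dn n) ^ (1 + 2)) := by
      intro n hn
      have h1 := (hdnpos n hn).ne'
      simp only [Nat.reduceAdd]
      field_simp
      ring
    rw [Finset.sum_congr rfl e]
    simp only [Finset.sum_add_distrib, ← Finset.mul_sum, ← hA]
    ring
  · rw [hin 1 3 _ _ _ _ hu1 hu3]
    have e : ∀ n ∈ SN, (d / dn n) ^ 2 * (EK0 * ((d - (n : ℝ) * Δ * Real.cos θ) / dn n - 1) * 0 + EK2 * rf * -rf)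
        = (-(EK2 * rf ^ 2)) * ((n : ℝ) ^ 0 * (d / dn n) ^ (0 + 2)) :=
      fun n _ => by ring
    rw [Finset.sum_congr rfl e]
    simp only [← Finset.mul_sum, ← hA]
    ring
  · rw [hin 2 2 _ _ _ _ hu2 hu2]
    have e : ∀ n ∈ SN, (d / dn n) ^ 2 * (EK0 * (d * (n : ℝ) * Δ * Real.sin θ / dn n) * (d * (n : ℝ) * Δ * Real.sin θ / dn n) + EK2 * 0 * 0)
        = (EK0 * Δ ^ 2 * (Real.sin θ) ^ 2) * ((n : ℝ) ^ 2 * (d / dn n) ^ (2 + 2)) := by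
      intro n hn
      have h1 := (hdnpos n hn).ne'
      simp only [Nat.reduceAdd]
      field_simp
      ring
    rw [Finset.sum_congr rfl e]
    simp only [← Finset.mul_sum, ← hA]
    ring
  · rw [hin 2 3 _ _ _ _ hu2 hu3]
    simp
  · rw [hin 3 3 _ _ _ _ hu3 hu3]
    have e : ∀ n ∈ SN, (d / dn n) ^ 2 * (EK0 * 0 * 0 + EK2 * -rf * -rf)
        = (EK2 * rf ^ 2) * ((n : ℝ) ^ 0 * (d / dn n) ^ (0 + 2)) :=
      fun n _ => by ring
    rw [Finset.sum_congr rfl e]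
    simp only [← Finset.mul_sum, ← hA]
    ring
end
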